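/- Let F_n be a sequence of φ-MID distribution functions on ℝ^d, F_n = φ(-log G_n) with G_n MID, and suppose F_n → F weakly with F a proper distribution function and G_n → G weakly with G a proper distribution function. Then F = φ(-log G) with G MID; i.e., the weak limit of φ-MID laws is φ-MID. -/

import Mathlib

open MeasureTheory Filter Topology

/-- `F` is a (multivariate) distribution function on `ℝ^d`: `F(y) = ν {x | x ≤ y}` for a
probability measure `ν`. -/
def IsDF {d : ℕ} (F : (Fin d → ℝ) → ℝ) : Prop :=
  ∃ ν : Measure (Fin d → ℝ), IsProbabilityMeasure ν ∧
    ∀ y, F y = (ν {x | x ≤ y}).toReal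

/-- `G` is max-infinitely divisible: `G^{1/n}` is a distribution function for every `n ≥ 1`. -/
def IsMID {d : ℕ} (G : (Fin d → ℝ) → ℝ) : Prop :=
  IsDF G ∧ ∀ n : ℕ, 0 < n → IsDF (fun y => G y ^ ((n : ℝ)⁻¹))

/-- `φ` is the Laplace transform of a (strictly) positive random variable. -/
def IsLaplaceOfPos (φ : ℝ → ℝ) : Prop :=
  ∃ μ : Measure ℝ, IsProbabilityMeasure μ ∧ (∀ᵐ x ∂μ, 0 < x) ∧
    ∀ v : ℝ, 0 ≤ v → φ v = ∫ x, Real.exp (-v * x) ∂μ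

/-- The distribution function of a probability measure on `ℝ^d`. -/
noncomputable def DFof {d : ℕ} (ν : ProbabilityMeasure (Fin d → ℝ)) :
    (Fin d → ℝ) → ℝ :=
  fun y => ((ν : Measure (Fin d → ℝ)) {x | x ≤ y}).toReal

/-- `F = φ(-log G)` pointwise, with the convention `φ(∞) = 0` where `G` vanishes. -/
def PhiRel (φ : ℝ → ℝ) {d : ℕ} (F G : (Fin d → ℝ) → ℝ) : Prop :=
  ∀ y, (0 < G y → F y = φ (-Real.log (G y))) ∧ (G y = 0 → F y = 0)


namespace PhiMID

open scoped ENNReal NNReal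

variable {d : ℕ}

/-- The lower orthant. -/
def orth (y : Fin d → ℝ) : Set (Fin d → ℝ) := {x | x ≤ y}

/-- Shift by `δ` in every coordinate. -/
def sh (y : Fin d → ℝ) (δ : ℝ) : Fin d → ℝ := fun i => y i + δ

lemma isClosed_orth (y : Fin d → ℝ) : IsClosed (orth y) := by
  have : orth y = ⋂ i, {x : Fin d → ℝ | x i ≤ y i} := by
    ext x; simp [orth, Pi.le_def, Set.mem_iInter]
  rw [this]
  exact isClosed_iInter fun i => isClosed_le (continuous_apply i) continuous_const

lemma measurableSet_orth (y : Fin d → ℝ) : MeasurableSet (orth y) :=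
  (isClosed_orth y).measurableSet

lemma orth_mono {y y' : Fin d → ℝ} (h : y ≤ y') : orth y ⊆ orth y' :=
  fun _ hx => le_trans hx h

lemma frontier_orth_subset (y : Fin d → ℝ) :
    frontier (orth y) ⊆ {x | x ≤ y ∧ ∃ i, x i = y i} := by
  intro x hx
  have hopen : IsOpen {x : Fin d → ℝ | ∀ i, x i < y i} := by
    have : {x : Fin d → ℝ | ∀ i, x i < y i} = ⋂ i, {x : Fin d → ℝ | x i < y i} := by
      ext x; simp [Set.mem_iInter]
    rw [this]
    exact isOpen_iInter_of_finite fun i => isOpen_lt (continuous_apply i) continuous_const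
  have hsub : {x : Fin d → ℝ | ∀ i, x i < y i} ⊆ interior (orth y) :=
    hopen.subset_interior_iff.mpr fun x hx => fun i => (hx i).le
  have h1 : x ∈ closure (orth y) := hx.1
  have h2 : x ∉ interior (orth y) := hx.2
  rw [(isClosed_orth y).closure_eq] at h1
  refine ⟨h1, ?_⟩
  by_contra hc
  push_neg at hc
  exact h2 (hsub fun i => lt_of_le_of_ne (h1 i) (hc i))

/-- For `0 < δ₁ < δ₂`, the frontiers of shifted orthants are disjoint. -/
lemma frontier_orth_sh_disjoint (y : Fin d → ℝ) {δ₁ δ₂ : ℝ} (h : δ₁ < δ₂) :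
    Disjoint (frontier (orth (sh y δ₁))) (frontier (orth (sh y δ₂))) := by
  rw [Set.disjoint_left]
  intro x h1 h2
  obtain ⟨hle, -⟩ := frontier_orth_subset _ h1
  obtain ⟨-, i, hi⟩ := frontier_orth_subset _ h2
  have := hle i
  simp only [sh] at this hi
  linarith [this, hi.le, hi.ge]

/-- There exist good shifts: `δ ∈ (0, ε)` with null frontier for the shifted orthant. -/
lemma good_shift (μ : Measure (Fin d → ℝ)) [IsFiniteMeasure μ] (y : Fin d → ℝ)
    {ε : ℝ} (hε : 0 < ε) :
    ∃ δ : ℝ, 0 < δ ∧ δ < ε ∧ μ (frontier (orth (sh y δ))) = 0 := by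
  set As : ℝ → Set (Fin d → ℝ) := fun δ =>
    if 0 < δ then frontier (orth (sh y δ)) else ∅ with hAs
  have hmeas : ∀ δ, MeasurableSet (As δ) := by
    intro δ
    by_cases h : 0 < δ <;> simp [hAs, h, (isClosed_frontier (s := orth (sh y δ))).measurableSet]
  have hdisj : Pairwise (Function.onFun Disjoint As) := by
    intro a b hab
    rcases lt_trichotomy a b with h | h | h
    · by_cases ha : 0 < a
      · by_cases hb : 0 < b
        · simpa [hAs, ha, hb, Function.onFun] using frontier_orth_sh_disjoint y h
        · simp [hAs, hb, Function.onFun]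
      · simp [hAs, ha, Function.onFun]
    · exact absurd h hab
    · by_cases ha : 0 < a
      · by_cases hb : 0 < b
        · simpa [hAs, ha, hb, Function.onFun] using (frontier_orth_sh_disjoint y h).symm
        · simp [hAs, hb, Function.onFun]
      · simp [hAs, ha, Function.onFun]
  have hcount : {δ : ℝ | 0 < μ (As δ)}.Countable :=
    Measure.countable_meas_pos_of_disjoint_iUnion (μ := μ) hmeas hdisj
  have hvol : (volume (Set.Ioo (0:ℝ) ε)) ≠ 0 := by
    simp [Real.volume_Ioo, hε]
  have : ¬ (Set.Ioo (0:ℝ) ε ⊆ {δ : ℝ | 0 < μ (As δ)}) := by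
    intro hsub
    have h2 := measure_mono (μ := volume) hsub
    rw [hcount.measure_zero volume] at h2
    exact hvol (le_antisymm h2 (zero_le))
  obtain ⟨δ, hδ, hδ2⟩ := Set.not_subset.mp this
  refine ⟨δ, hδ.1, hδ.2, ?_⟩
  have : ¬ 0 < μ (As δ) := hδ2
  have h0 : μ (As δ) = 0 := by
    by_contra h
    exact this (pos_iff_ne_zero.mpr h)
  simpa [hAs, hδ.1] using h0

/-- A good sequence of shifts tending to zero. -/
lemma good_seq (μ : Measure (Fin d → ℝ)) [IsFiniteMeasure μ] (y : Fin d → ℝ) :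
    ∃ δ : ℕ → ℝ, (∀ m, 0 < δ m) ∧ Tendsto δ atTop (𝓝 0) ∧
      ∀ m, μ (frontier (orth (sh y (δ m)))) = 0 := by
  have h : ∀ m : ℕ, ∃ δ : ℝ, 0 < δ ∧ δ < 1/(m+1) ∧ μ (frontier (orth (sh y δ))) = 0 := by
    intro m
    exact good_shift μ y (by positivity)
  choose δ h1 h2 h3 using h
  refine ⟨δ, h1, ?_, h3⟩
  have hsq : Tendsto (fun m : ℕ => 1/((m:ℝ)+1)) atTop (𝓝 0) :=
    tendsto_one_div_add_atTop_nhds_zero_nat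
  exact squeeze_zero (fun m => (h1 m).le) (fun m => (h2 m).le) hsq

/-- Right continuity of the DF of a finite measure, along arbitrary positive shifts → 0. -/
lemma df_rightCont (μ : Measure (Fin d → ℝ)) [IsFiniteMeasure μ] (y : Fin d → ℝ)
    (δ : ℕ → ℝ) (h0 : ∀ m, 0 < δ m) (hlim : Tendsto δ atTop (𝓝 0)) :
    Tendsto (fun m => (μ (orth (sh y (δ m)))).toReal) atTop (𝓝 ((μ (orth y)).toReal)) := by
  -- canonical antitone family
  have hmono : Antitone (fun m : ℕ => orth (sh y (1/((m:ℝ)+1)))) := by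
    intro a b hab
    apply orth_mono
    intro i
    simp only [sh]
    have : 1/((b:ℝ)+1) ≤ 1/((a:ℝ)+1) := by
      apply one_div_le_one_div_of_le (by positivity)
      exact_mod_cast add_le_add_left (Nat.cast_le.mpr hab) 1
    linarith
  have hiInter : (⋂ m : ℕ, orth (sh y (1/((m:ℝ)+1)))) = orth y := by
    ext x
    simp only [Set.mem_iInter, orth, Set.mem_setOf_eq, Pi.le_def, sh]
    constructor
    · intro h i
      by_contra hc
      push_neg at hc
      obtain ⟨m, hm⟩ := exists_nat_one_div_lt (sub_pos.mpr hc)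
      have := h m i
      linarith
    · intro h m i
      have := h i
      have : x i ≤ y i := this
      have hp : (0:ℝ) < 1/((m:ℝ)+1) := by positivity
      linarith
  have hcanon : Tendsto (fun m : ℕ => μ (orth (sh y (1/((m:ℝ)+1))))) atTop (𝓝 (μ (orth y))) := by
    have := MeasureTheory.tendsto_measure_iInter_atTop (μ := μ)
      (s := fun m : ℕ => orth (sh y (1/((m:ℝ)+1))))
      (fun m => (measurableSet_orth _).nullMeasurableSet) hmono ⟨0, measure_ne_top μ _⟩
    rwa [hiInter] at this
  have hcanonR : Tendsto (fun m : ℕ => (μ (orth (sh y (1/((m:ℝ)+1))))).toReal) atTop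
      (𝓝 ((μ (orth y)).toReal)) :=
    (ENNReal.tendsto_toReal (measure_ne_top μ _)).comp hcanon
  -- squeeze
  rw [Metric.tendsto_atTop]
  intro ε hε
  rw [Metric.tendsto_atTop] at hcanonR
  obtain ⟨m₀, hm₀⟩ := hcanonR ε hε
  have hkey := hm₀ m₀ le_rfl
  -- eventually δ m ≤ 1/(m₀+1)
  have hev : ∀ᶠ m in atTop, δ m < 1/((m₀:ℝ)+1) :=
    hlim.eventually (Filter.Tendsto.eventually_lt_const (by positivity) tendsto_id)
  rw [eventually_atTop] at hev
  obtain ⟨N, hN⟩ := hev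
  refine ⟨N, fun m hm => ?_⟩
  have h1 : μ (orth y) ≤ μ (orth (sh y (δ m))) := by
    apply measure_mono
    apply orth_mono
    intro i; simp only [sh]; linarith [(h0 m)]
  have h2 : μ (orth (sh y (δ m))) ≤ μ (orth (sh y (1/((m₀:ℝ)+1)))) := by
    apply measure_mono
    apply orth_mono
    intro i; simp only [sh]; linarith [hN m hm]
  have h1R : (μ (orth y)).toReal ≤ (μ (orth (sh y (δ m)))).toReal :=
    ENNReal.toReal_mono (measure_ne_top μ _) h1
  have h2R : (μ (orth (sh y (δ m)))).toReal ≤ (μ (orth (sh y (1/((m₀:ℝ)+1))))).toReal :=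
    ENNReal.toReal_mono (measure_ne_top μ _) h2
  rw [Real.dist_eq] at hkey ⊢
  rw [abs_lt] at hkey ⊢
  constructor <;> [linarith [hkey.1]; linarith [hkey.2]]

/-- Coordinate halfspace. -/
def hsp (i : Fin d) (c : ℝ) : Set (Fin d → ℝ) := {x | x i ≤ c}

lemma isClosed_hsp (i : Fin d) (c : ℝ) : IsClosed (hsp i c) :=
  isClosed_le (continuous_apply i) continuous_const

lemma frontier_hsp_subset (i : Fin d) (c : ℝ) :
    frontier (hsp i c) ⊆ {x | x i = c} := by
  intro x hx
  have hopen : IsOpen {x : Fin d → ℝ | x i < c} :=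
    isOpen_lt (continuous_apply i) continuous_const
  have hsub : {x : Fin d → ℝ | x i < c} ⊆ interior (hsp i c) :=
    hopen.subset_interior_iff.mpr (by
      intro x hx
      simp only [hsp, Set.mem_setOf_eq] at hx ⊢
      exact hx.le)
  have h1 : x ∈ hsp i c := by
    have := hx.1; rwa [(isClosed_hsp i c).closure_eq] at this
  exact le_antisymm h1 (by by_contra hc; push_neg at hc; exact hx.2 (hsub hc))

/-- For a finite measure, one can find arbitrarily low halfspace levels with small measure
and null frontier. -/
lemma good_low_level (μ : Measure (Fin d → ℝ)) [IsFiniteMeasure μ] (i : Fin d)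
    {ε : ℝ} (hε : 0 < ε) :
    ∃ M : ℝ, μ (frontier (hsp i M)) = 0 ∧ (μ (hsp i M)).toReal ≤ ε := by
  -- first, small level by continuity from above
  have hmono : Antitone (fun m : ℕ => hsp i (-(m:ℝ))) := by
    intro a b hab x hx
    simp only [hsp, Set.mem_setOf_eq] at hx ⊢
    have : -(b:ℝ) ≤ -(a:ℝ) := by exact_mod_cast neg_le_neg (Nat.cast_le.mpr hab)
    linarith
  have hiInter : (⋂ m : ℕ, hsp i (-(m:ℝ))) = ∅ := by
    ext x
    simp only [Set.mem_iInter, hsp, Set.mem_setOf_eq, Set.mem_empty_iff_false, iff_false]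
    push_neg
    obtain ⟨m, hm⟩ := exists_nat_gt (-(x i))
    exact ⟨m, by linarith⟩
  have htend : Tendsto (fun m : ℕ => μ (hsp i (-(m:ℝ)))) atTop (𝓝 0) := by
    have := MeasureTheory.tendsto_measure_iInter_atTop (μ := μ)
      (s := fun m : ℕ => hsp i (-(m:ℝ)))
      (fun m => (isClosed_hsp i _).measurableSet.nullMeasurableSet) hmono
      ⟨0, measure_ne_top μ _⟩
    rwa [hiInter, measure_empty] at this
  have htendR : Tendsto (fun m : ℕ => (μ (hsp i (-(m:ℝ)))).toReal) atTop (𝓝 0) := by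
    simpa [Function.comp_def] using (ENNReal.tendsto_toReal (by simp)).comp htend
  obtain ⟨m, hm⟩ := (htendR.eventually (eventually_le_nhds hε)).exists
  -- now find a good level in (-(m+1), -m) with null frontier
  set As : ℝ → Set (Fin d → ℝ) := fun c => frontier (hsp i c) with hAs
  have hmeas : ∀ c, MeasurableSet (As c) := fun c =>
    (isClosed_frontier (s := hsp i c)).measurableSet
  have hdisj : Pairwise (Function.onFun Disjoint As) := by
    intro a b hab
    rw [Function.onFun, Set.disjoint_left]
    intro x h1 h2
    exact hab ((frontier_hsp_subset i a h1).symm.trans (frontier_hsp_subset i b h2))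
  have hcount : {c : ℝ | 0 < μ (As c)}.Countable :=
    Measure.countable_meas_pos_of_disjoint_iUnion (μ := μ) hmeas hdisj
  have hvol : (volume (Set.Ioo (-(m:ℝ)-1) (-(m:ℝ)))) ≠ 0 := by
    simp [Real.volume_Ioo]
  have hnot : ¬ (Set.Ioo (-(m:ℝ)-1) (-(m:ℝ)) ⊆ {c : ℝ | 0 < μ (As c)}) := by
    intro hsub
    have h2 := measure_mono (μ := volume) hsub
    rw [hcount.measure_zero volume] at h2
    exact hvol (le_antisymm h2 (zero_le))
  obtain ⟨M, hM, hM2⟩ := Set.not_subset.mp hnot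
  refine ⟨M, ?_, ?_⟩
  · have : ¬ 0 < μ (As M) := hM2
    by_contra h
    exact this (pos_iff_ne_zero.mpr h)
  · refine le_trans ?_ hm
    apply ENNReal.toReal_mono (measure_ne_top μ _)
    apply measure_mono
    intro x hx
    simp only [hsp, Set.mem_setOf_eq] at hx ⊢
    have := hM.2
    linarith

/-- Portmanteau wrapper: convergence of real-valued measures of sets with null frontier. -/
lemma portmanteau_toReal {νs : ℕ → ProbabilityMeasure (Fin d → ℝ)}
    {ν : ProbabilityMeasure (Fin d → ℝ)} (h : Tendsto νs atTop (𝓝 ν))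
    {E : Set (Fin d → ℝ)} (hE : (ν : Measure (Fin d → ℝ)) (frontier E) = 0) :
    Tendsto (fun n => ((νs n : Measure (Fin d → ℝ)) E).toReal) atTop
      (𝓝 (((ν : Measure (Fin d → ℝ)) E).toReal)) := by
  have key := ProbabilityMeasure.tendsto_measure_of_null_frontier_of_tendsto' h hE
  exact (ENNReal.tendsto_toReal (measure_ne_top _ E)).comp key

section Phi

variable {φ : ℝ → ℝ}

lemma phi_integrable (μ : Measure ℝ) [IsProbabilityMeasure μ] (hpos : ∀ᵐ x ∂μ, 0 < x)
    {v : ℝ} (hv : 0 ≤ v) : Integrable (fun x => Real.exp (-v * x)) μ := by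
  apply Integrable.mono' (integrable_const 1)
  · exact (Real.continuous_exp.comp (continuous_const.mul continuous_id)).aestronglyMeasurable
  · filter_upwards [hpos] with x hx
    rw [Real.norm_eq_abs, abs_of_pos (Real.exp_pos _)]
    apply Real.exp_le_one_iff.mpr
    nlinarith

lemma phi_nonneg (hφ : IsLaplaceOfPos φ) {v : ℝ} (hv : 0 ≤ v) : 0 ≤ φ v := by
  obtain ⟨μ, hprob, hpos, hrep⟩ := hφ
  rw [hrep v hv]
  exact integral_nonneg fun x => (Real.exp_pos _).le

lemma phi_antitone (hφ : IsLaplaceOfPos φ) {v w : ℝ} (hv : 0 ≤ v) (hvw : v ≤ w) : φ w ≤ φ v := by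
  obtain ⟨μ, hprob, hpos, hrep⟩ := hφ
  rw [hrep v hv, hrep w (hv.trans hvw)]
  apply integral_mono_ae (phi_integrable μ hpos (hv.trans hvw))
    (phi_integrable μ hpos hv)
  filter_upwards [hpos] with x hx
  apply Real.exp_le_exp.mpr
  nlinarith

lemma phi_cont_seq (hφ : IsLaplaceOfPos φ) {v : ℕ → ℝ} {v₀ : ℝ} (hv : ∀ m, 0 ≤ v m) (hv₀ : 0 ≤ v₀)
    (hlim : Tendsto v atTop (𝓝 v₀)) : Tendsto (fun m => φ (v m)) atTop (𝓝 (φ v₀)) := by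
  obtain ⟨μ, hprob, hpos, hrep⟩ := hφ
  have h1 : ∀ m, φ (v m) = ∫ x, Real.exp (-(v m) * x) ∂μ := fun m => hrep _ (hv m)
  simp only [h1, hrep v₀ hv₀]
  apply MeasureTheory.tendsto_integral_of_dominated_convergence (fun _ => 1)
  · exact fun m =>
      (Real.continuous_exp.comp (continuous_const.mul continuous_id)).aestronglyMeasurable
  · exact integrable_const 1
  · intro m
    filter_upwards [hpos] with x hx
    rw [Real.norm_eq_abs, abs_of_pos (Real.exp_pos _)]
    apply Real.exp_le_one_iff.mpr
    nlinarith [hv m]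
  · filter_upwards [hpos] with x hx
    have hcont : Continuous fun w : ℝ => Real.exp (-w * x) := by continuity
    exact hcont.continuousAt.tendsto.comp hlim

lemma phi_tendsto_zero (hφ : IsLaplaceOfPos φ) : Tendsto (fun m : ℕ => φ (m : ℝ)) atTop (𝓝 0) := by
  obtain ⟨μ, hprob, hpos, hrep⟩ := hφ
  have h1 : ∀ m : ℕ, φ (m : ℝ) = ∫ x, Real.exp (-(m:ℝ) * x) ∂μ := fun m =>
    hrep _ (Nat.cast_nonneg m)
  have key : Tendsto (fun m : ℕ => ∫ x, Real.exp (-(m:ℝ) * x) ∂μ) atTop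
      (𝓝 (∫ _x, (0:ℝ) ∂μ)) := by
    apply MeasureTheory.tendsto_integral_of_dominated_convergence (fun _ => 1)
    · exact fun m =>
        (Real.continuous_exp.comp (continuous_const.mul continuous_id)).aestronglyMeasurable
    · exact integrable_const 1
    · intro m
      filter_upwards [hpos] with x hx
      rw [Real.norm_eq_abs, abs_of_pos (Real.exp_pos _)]
      apply Real.exp_le_one_iff.mpr
      nlinarith [Nat.cast_nonneg (α := ℝ) m]
    · filter_upwards [hpos] with x hx
      have : Tendsto (fun m : ℕ => -(m:ℝ) * x) atTop atBot := by
        apply Tendsto.atBot_mul_const hx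
        exact tendsto_neg_atBot_iff.mpr tendsto_natCast_atTop_atTop
      exact Real.tendsto_exp_atBot.comp this
  have hz : ∫ _x, (0:ℝ) ∂μ = 0 := by simp
  rw [hz] at key
  exact key.congr (fun m => (h1 m).symm)

/-- `ψ` : the continuous extension of `t ↦ φ(-log t)` to `[0,1]`, with `ψ 0 = 0`. -/
noncomputable def psi (φ : ℝ → ℝ) (t : ℝ) : ℝ := if 0 < t then φ (-Real.log t) else 0

/-- Core sequential-continuity claim for `ψ` on `[0,1]`. -/
lemma psi_limit (hφ : IsLaplaceOfPos φ) {t : ℕ → ℝ} {t₀ : ℝ} (ht : ∀ m, 0 ≤ t m ∧ t m ≤ 1)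
    (hlim : Tendsto t atTop (𝓝 t₀)) {s : ℕ → ℝ} (hs : ∀ m, s m = psi φ (t m))
    {s₀ : ℝ} (hslim : Tendsto s atTop (𝓝 s₀)) : s₀ = psi φ t₀ := by
  have ht₀0 : 0 ≤ t₀ := ge_of_tendsto hlim (Eventually.of_forall fun m => (ht m).1)
  have ht₀1 : t₀ ≤ 1 := le_of_tendsto hlim (Eventually.of_forall fun m => (ht m).2)
  rcases eq_or_lt_of_le ht₀0 with h0 | h0
  · -- t₀ = 0
    have hpsi0 : psi φ t₀ = 0 := by rw [psi, if_neg (by rw [← h0]; exact lt_irrefl 0)]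
    rw [hpsi0]
    have hs_nonneg : ∀ m, 0 ≤ s m := by
      intro m
      rw [hs m, psi]
      split
      · exact phi_nonneg hφ (by
          rw [neg_nonneg]
          exact Real.log_nonpos (by linarith [(ht m).1]) (ht m).2)
      · exact le_rfl
    have h1 : 0 ≤ s₀ := ge_of_tendsto hslim (Eventually.of_forall hs_nonneg)
    have h2 : ∀ ε : ℝ, 0 < ε → s₀ ≤ ε := by
      intro ε hε
      obtain ⟨V, hV⟩ := (phi_tendsto_zero hφ |>.eventually (eventually_le_nhds hε)).exists
      have hVle : φ (V:ℝ) ≤ ε := hV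
      have hev : ∀ᶠ m in atTop, t m < Real.exp (-(V:ℝ)) := by
        rw [← h0] at hlim
        exact hlim.eventually_lt_const (Real.exp_pos _)
      refine le_of_tendsto hslim ?_
      filter_upwards [hev] with m hm
      rw [hs m, psi]
      split
      case isTrue hpos =>
        refine le_trans (phi_antitone hφ (Nat.cast_nonneg V) ?_) hVle
        have : Real.log (t m) < -(V:ℝ) := by
          calc Real.log (t m) < Real.log (Real.exp (-(V:ℝ))) :=
                Real.log_lt_log hpos hm
            _ = -(V:ℝ) := Real.log_exp _
        linarith
      case isFalse => exact hε.le
    have : s₀ ≤ 0 := le_of_forall_pos_le_add (by intro ε hε; linarith [h2 ε hε])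
    linarith
  · -- 0 < t₀
    have hpsi : psi φ t₀ = φ (-Real.log t₀) := by rw [psi, if_pos h0]
    rw [hpsi]
    have hev : ∀ᶠ m in atTop, 0 < t m := by
      have := hlim.eventually_const_lt (show t₀/2 < t₀ by linarith)
      filter_upwards [this] with m hm
      linarith
    -- s m eventually equals φ(-log t m)
    have hseq : ∀ᶠ m in atTop, s m = φ (-Real.log (t m)) := by
      filter_upwards [hev] with m hm
      rw [hs m, psi, if_pos hm]
    -- -log t m → -log t₀ with everything nonneg... use subsequence trick via full limit:
    have hloglim : Tendsto (fun m => -Real.log (t m)) atTop (𝓝 (-Real.log t₀)) :=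
      (Real.continuousAt_log (ne_of_gt h0)).tendsto.comp hlim |>.neg
    -- problem: -log (t m) ≥ 0 only eventually; adjust with max 0
    have hlim2 : Tendsto (fun m => φ (max 0 (-Real.log (t m)))) atTop
        (𝓝 (φ (-Real.log t₀))) := by
      have h₀ : max 0 (-Real.log t₀) = -Real.log t₀ :=
        max_eq_right (by rw [neg_nonneg]; exact Real.log_nonpos ht₀0 ht₀1)
      have := phi_cont_seq hφ (v := fun m => max 0 (-Real.log (t m)))
        (v₀ := max 0 (-Real.log t₀)) (fun m => le_max_left _ _) (le_max_left _ _)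
        (Tendsto.max tendsto_const_nhds hloglim)
      rwa [h₀] at this
    have heq : ∀ᶠ m in atTop, s m = φ (max 0 (-Real.log (t m))) := by
      filter_upwards [hev] with m hm
      rw [hs m, psi, if_pos hm, max_eq_right]
      rw [neg_nonneg]
      exact Real.log_nonpos hm.le (ht m).2
    have : Tendsto s atTop (𝓝 (φ (-Real.log t₀))) := hlim2.congr'
      (heq.mono fun m hm => hm.symm)
    exact tendsto_nhds_unique hslim this

end Phi

section Key

variable {d : ℕ}

/-- Coordinatewise embedding of `ℝ^d` into `(EReal)^d`. -/
def eE : (Fin d → ℝ) → (Fin d → EReal) := fun x i => (x i : EReal)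

lemma measurable_eE : Measurable (eE (d := d)) :=
  measurable_pi_lambda _ fun i =>
    continuous_coe_real_ereal.measurable.comp (measurable_pi_apply i)

/-- Closed lower orthant in the compactification. -/
def AE (y : Fin d → ℝ) : Set (Fin d → EReal) := {z | ∀ i, z i ≤ (y i : EReal)}

/-- Open lower orthant in the compactification. -/
def UE (y : Fin d → ℝ) : Set (Fin d → EReal) := {z | ∀ i, z i < (y i : EReal)}

lemma isClosed_AE (y : Fin d → ℝ) : IsClosed (AE y) := by
  have : AE y = ⋂ i, (fun z : Fin d → EReal => z i) ⁻¹' (Set.Iic ((y i : EReal))) := by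
    ext z; simp [AE, Set.mem_iInter]
  rw [this]
  exact isClosed_iInter fun i => IsClosed.preimage (continuous_apply i) isClosed_Iic

lemma isCompact_AE (y : Fin d → ℝ) : IsCompact (AE y) := (isClosed_AE y).isCompact

lemma isOpen_UE (y : Fin d → ℝ) : IsOpen (UE y) := by
  have : UE y = ⋂ i, (fun z : Fin d → EReal => z i) ⁻¹' (Set.Iio ((y i : EReal))) := by
    ext z; simp [UE, Set.mem_iInter]
  rw [this]
  exact isOpen_iInter_of_finite fun i => IsOpen.preimage (continuous_apply i) isOpen_Iio

lemma eE_preimage_AE (y : Fin d → ℝ) : eE ⁻¹' (AE y) = orth y := by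
  ext x
  simp [AE, eE, orth, Pi.le_def, EReal.coe_le_coe_iff]

lemma AE_subset_UE {y : Fin d → ℝ} {δ : ℝ} (hδ : 0 < δ) : AE y ⊆ UE (sh y δ) := by
  intro z hz i
  exact lt_of_le_of_lt (hz i) (by exact_mod_cast EReal.coe_lt_coe_iff.mpr (by simp [sh]; linarith))

lemma UE_subset_AE (y : Fin d → ℝ) : UE y ⊆ AE y := fun z hz i => (hz i).le

theorem key_exists_df_measure
    (ρn : ℕ → Measure (Fin d → ℝ)) (hρ : ∀ n, IsProbabilityMeasure (ρn n))
    (H : (Fin d → ℝ) → ℝ) (S : Set (Fin d → ℝ))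
    (hconv : ∀ y ∈ S, Tendsto (fun n => (ρn n (orth y)).toReal) atTop (𝓝 (H y)))
    (hdense : ∀ y : Fin d → ℝ, ∀ ε : ℝ, 0 < ε → ∃ δ, 0 < δ ∧ δ < ε ∧ sh y δ ∈ S)
    (hrc : ∀ (y : Fin d → ℝ) (δ : ℕ → ℝ), (∀ m, 0 < δ m) → Tendsto δ atTop (𝓝 0) →
      Tendsto (fun m => H (sh y (δ m))) atTop (𝓝 (H y)))
    (htail_low : ∀ (i : Fin d) (ε : ℝ), 0 < ε → ∃ M : ℝ,
      ∀ᶠ n in atTop, (ρn n (hsp i M)).toReal ≤ ε)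
    (htail_high : ∀ ε : ℝ, 0 < ε → ∃ y ∈ S, 1 - ε ≤ H y) :
    ∃ ρ : Measure (Fin d → ℝ), IsProbabilityMeasure ρ ∧ ∀ y, (ρ (orth y)).toReal = H y := by
  classical
  haveI : ∀ n, IsProbabilityMeasure (ρn n) := hρ
  -- the pushforward measures on the compactification
  set ρh : ℕ → Measure (Fin d → EReal) := fun n => (ρn n).map eE with hρh
  haveI hρhprob : ∀ n, IsProbabilityMeasure (ρh n) := fun n =>
    Measure.isProbabilityMeasure_map measurable_eE.aemeasurable
  set g : Set (Fin d → EReal) → ℕ → ℝ := fun U n => (ρh n U).toReal with hgdef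
  have hg0 : ∀ U n, 0 ≤ g U n := fun U n => ENNReal.toReal_nonneg
  have hg1 : ∀ U n, g U n ≤ 1 := by
    intro U n
    have h1 : ρh n U ≤ 1 := prob_le_one
    calc (ρh n U).toReal ≤ (1 : ℝ≥0∞).toReal := ENNReal.toReal_mono (by simp) h1
      _ = 1 := by simp
  have hgmono : ∀ (U V : Set (Fin d → EReal)), U ⊆ V → ∀ n, g U n ≤ g V n := fun U V h n =>
    ENNReal.toReal_mono (measure_ne_top _ _) (measure_mono h)
  -- a nonprincipal ultrafilter extending atTop
  let 𝒰 : Ultrafilter ℕ := Ultrafilter.of atTop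
  have h𝒰le : (𝒰 : Filter ℕ) ≤ atTop := Ultrafilter.of_le _
  -- the generalized limit of set measures along the ultrafilter
  have hLex : ∀ U : Set (Fin d → EReal), ∃ a : ℝ,
      a ∈ Set.Icc (0:ℝ) 1 ∧ Tendsto (g U) 𝒰 (𝓝 a) := by
    intro U
    have hmem : (Ultrafilter.map (g U) 𝒰 : Filter ℝ) ≤ 𝓟 (Set.Icc (0:ℝ) 1) := by
      rw [Filter.le_principal_iff, Ultrafilter.coe_map, Filter.mem_map]
      exact Filter.univ_mem' fun n => ⟨hg0 U n, hg1 U n⟩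
    obtain ⟨a, ha, hle⟩ := isCompact_Icc.ultrafilter_le_nhds (Ultrafilter.map (g U) 𝒰) hmem
    exact ⟨a, ha, by rwa [Ultrafilter.coe_map] at hle⟩
  set L : Set (Fin d → EReal) → ℝ := fun U => (hLex U).choose with hLdef
  have hLtendsto : ∀ U, Tendsto (g U) 𝒰 (𝓝 (L U)) := fun U => (hLex U).choose_spec.2
  have hL0 : ∀ U, 0 ≤ L U := fun U => (hLex U).choose_spec.1.1
  have hL1 : ∀ U, L U ≤ 1 := fun U => (hLex U).choose_spec.1.2
  have hLmono : ∀ U V, U ⊆ V → L U ≤ L V := fun U V h =>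
    le_of_tendsto_of_tendsto' (hLtendsto U) (hLtendsto V) (hgmono U V h)
  have hLunion : ∀ U V, L (U ∪ V) ≤ L U + L V := by
    intro U V
    refine le_of_tendsto_of_tendsto' (hLtendsto (U ∪ V)) ((hLtendsto U).add (hLtendsto V)) ?_
    intro n
    have h1 : ρh n (U ∪ V) ≤ ρh n U + ρh n V := measure_union_le U V
    calc (ρh n (U ∪ V)).toReal ≤ (ρh n U + ρh n V).toReal :=
          ENNReal.toReal_mono (by simp [measure_ne_top]) h1
      _ = (ρh n U).toReal + (ρh n V).toReal :=
          ENNReal.toReal_add (measure_ne_top _ _) (measure_ne_top _ _)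
  have hLdisj : ∀ U V W : Set (Fin d → EReal), MeasurableSet V → Disjoint U V →
      U ∪ V ⊆ W → L U + L V ≤ L W := by
    intro U V W hV hdisj hsub
    refine le_of_tendsto_of_tendsto' ((hLtendsto U).add (hLtendsto V)) (hLtendsto W) ?_
    intro n
    have h1 : ρh n U + ρh n V = ρh n (U ∪ V) := (measure_union hdisj hV).symm
    have h2 : ρh n (U ∪ V) ≤ ρh n W := measure_mono hsub
    calc (ρh n U).toReal + (ρh n V).toReal
        = (ρh n (U ∪ V)).toReal := by
          rw [← ENNReal.toReal_add (measure_ne_top _ _) (measure_ne_top _ _), h1]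
      _ ≤ (ρh n W).toReal := ENNReal.toReal_mono (measure_ne_top _ _) h2
  have hLuniv : L Set.univ = 1 := by
    refine tendsto_nhds_unique (hLtendsto Set.univ) ?_
    have : ∀ n, g Set.univ n = 1 := by
      intro n; simp [hgdef, measure_univ]
    rw [show (g Set.univ) = fun _ => (1:ℝ) from funext this]
    exact tendsto_const_nhds
  -- measures of orthants under the pushforward
  have hgAE : ∀ (n : ℕ) (y : Fin d → ℝ), ρh n (AE y) = ρn n (orth y) := by
    intro n y
    rw [hρh]
    rw [Measure.map_apply measurable_eE (isClosed_AE y).measurableSet, eE_preimage_AE]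
  -- the content
  set lam : TopologicalSpace.Compacts (Fin d → EReal) → ℝ := fun K =>
    sInf (L '' {U | IsOpen U ∧ (K : Set (Fin d → EReal)) ⊆ U}) with hlamdef
  have hlamne : ∀ K, (L '' {U | IsOpen U ∧ (K : Set (Fin d → EReal)) ⊆ U}).Nonempty :=
    fun K => ⟨L Set.univ, ⟨Set.univ, ⟨isOpen_univ, Set.subset_univ _⟩, rfl⟩⟩
  have hlambdd : ∀ K, BddBelow (L '' {U | IsOpen U ∧ (K : Set (Fin d → EReal)) ⊆ U}) := by
    intro K
    refine ⟨0, ?_⟩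
    rintro x ⟨U, -, rfl⟩
    exact hL0 U
  have hlam_le : ∀ (K : TopologicalSpace.Compacts (Fin d → EReal)) (U : Set (Fin d → EReal)),
      IsOpen U → (K : Set (Fin d → EReal)) ⊆ U → lam K ≤ L U := fun K U hU hKU =>
    csInf_le (hlambdd K) ⟨U, ⟨hU, hKU⟩, rfl⟩
  have hlam_ge : ∀ (K : TopologicalSpace.Compacts (Fin d → EReal)) (c : ℝ),
      (∀ U : Set (Fin d → EReal), IsOpen U → (K : Set (Fin d → EReal)) ⊆ U → c ≤ L U) →
      c ≤ lam K := by
    intro K c h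
    refine le_csInf (hlamne K) ?_
    rintro x ⟨U, ⟨hU, hKU⟩, rfl⟩
    exact h U hU hKU
  have hlam0 : ∀ K, 0 ≤ lam K := fun K => hlam_ge K 0 fun U _ _ => hL0 U
  have hlam_mono : ∀ K₁ K₂ : TopologicalSpace.Compacts (Fin d → EReal),
      (K₁ : Set (Fin d → EReal)) ⊆ K₂ → lam K₁ ≤ lam K₂ := by
    intro K₁ K₂ h
    refine le_csInf (hlamne K₂) ?_
    rintro x ⟨U, ⟨hU, hKU⟩, rfl⟩
    exact hlam_le K₁ U hU (h.trans hKU)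
  have hlam_subadd : ∀ K₁ K₂ : TopologicalSpace.Compacts (Fin d → EReal),
      lam (K₁ ⊔ K₂) ≤ lam K₁ + lam K₂ := by
    intro K₁ K₂
    refine le_of_forall_pos_le_add ?_
    intro ε hε
    obtain ⟨x₁, hx₁mem, hx₁⟩ := exists_lt_of_csInf_lt (hlamne K₁)
      (lt_add_of_pos_right (lam K₁) (half_pos hε))
    obtain ⟨U₁, ⟨hU₁, hKU₁⟩, rfl⟩ := hx₁mem
    obtain ⟨x₂, hx₂mem, hx₂⟩ := exists_lt_of_csInf_lt (hlamne K₂)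
      (lt_add_of_pos_right (lam K₂) (half_pos hε))
    obtain ⟨U₂, ⟨hU₂, hKU₂⟩, rfl⟩ := hx₂mem
    have hsub : ((K₁ ⊔ K₂ : TopologicalSpace.Compacts (Fin d → EReal)) :
        Set (Fin d → EReal)) ⊆ U₁ ∪ U₂ := by
      rw [TopologicalSpace.Compacts.coe_sup]
      exact Set.union_subset_union hKU₁ hKU₂
    calc lam (K₁ ⊔ K₂) ≤ L (U₁ ∪ U₂) := hlam_le _ _ (hU₁.union hU₂) hsub
      _ ≤ L U₁ + L U₂ := hLunion U₁ U₂
      _ ≤ lam K₁ + ε/2 + (lam K₂ + ε/2) := add_le_add hx₁.le hx₂.le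
      _ = lam K₁ + lam K₂ + ε := by ring
  have hlam_disj : ∀ K₁ K₂ : TopologicalSpace.Compacts (Fin d → EReal),
      Disjoint (K₁ : Set (Fin d → EReal)) K₂ → lam (K₁ ⊔ K₂) = lam K₁ + lam K₂ := by
    intro K₁ K₂ hdisj
    obtain ⟨V₁, V₂, hV₁, hV₂, hKV₁, hKV₂, hVdisj⟩ :=
      SeparatedNhds.of_isCompact_isCompact K₁.2 K₂.2 hdisj
    refine le_antisymm (hlam_subadd K₁ K₂) ?_
    refine hlam_ge _ _ ?_
    intro U hU hKU
    rw [TopologicalSpace.Compacts.coe_sup] at hKU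
    have h₁ : lam K₁ ≤ L (U ∩ V₁) := hlam_le _ _ (hU.inter hV₁)
      (Set.subset_inter ((Set.subset_union_left).trans hKU) hKV₁)
    have h₂ : lam K₂ ≤ L (U ∩ V₂) := hlam_le _ _ (hU.inter hV₂)
      (Set.subset_inter ((Set.subset_union_right).trans hKU) hKV₂)
    have h₃ : L (U ∩ V₁) + L (U ∩ V₂) ≤ L U := by
      apply hLdisj _ _ _ ((hU.inter hV₂).measurableSet)
        (hVdisj.mono Set.inter_subset_right Set.inter_subset_right)
      intro z hz
      rcases hz with h | h
      · exact h.1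
      · exact h.1
    linarith
  set cont : MeasureTheory.Content (Fin d → EReal) :=
    { toFun := fun K => Real.toNNReal (lam K)
      mono' := fun K₁ K₂ h => Real.toNNReal_mono (hlam_mono K₁ K₂ h)
      sup_disjoint' := by
        intro K₁ K₂ hdisj _ _
        show Real.toNNReal (lam (K₁ ⊔ K₂)) = Real.toNNReal (lam K₁) + Real.toNNReal (lam K₂)
        rw [hlam_disj K₁ K₂ hdisj, Real.toNNReal_add (hlam0 K₁) (hlam0 K₂)]
      sup_le' := by
        intro K₁ K₂
        show Real.toNNReal (lam (K₁ ⊔ K₂)) ≤ Real.toNNReal (lam K₁) + Real.toNNReal (lam K₂)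
        rw [← Real.toNNReal_add (hlam0 K₁) (hlam0 K₂)]
        exact Real.toNNReal_mono (hlam_subadd K₁ K₂) } with hcontdef
  have hcont_apply : ∀ K, (cont K : ℝ≥0∞) = ENNReal.ofReal (lam K) := by
    intro K
    rfl
  set μY : Measure (Fin d → EReal) := cont.measure with hμYdef
  -- upper bound via open sets
  have m2 : ∀ (A U : Set (Fin d → EReal)), IsOpen U → A ⊆ U →
      cont.outerMeasure A ≤ ENNReal.ofReal (L U) := by
    intro A U hU hAU
    have h1 : cont.outerMeasure A ≤ cont.outerMeasure U := measure_mono hAU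
    rw [cont.outerMeasure_of_isOpen U hU] at h1
    refine h1.trans ?_
    rw [MeasureTheory.Content.innerContent]
    refine iSup₂_le ?_
    intro K hKU
    rw [hcont_apply]
    exact ENNReal.ofReal_le_ofReal (hlam_le K U hU hKU)
  -- lower bound via compact subsets
  have m3 : ∀ (A : Set (Fin d → EReal)) (K : TopologicalSpace.Compacts (Fin d → EReal)),
      (K : Set (Fin d → EReal)) ⊆ A → (cont K : ℝ≥0∞) ≤ cont.outerMeasure A := by
    intro A K hKA
    rw [cont.outerMeasure_eq_iInf]
    refine le_iInf fun U => le_iInf fun hU => le_iInf fun hAU => ?_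
    exact cont.le_innerContent K ⟨U, hU⟩ (hKA.trans hAU)
  -- nonnegativity of H on S
  have hH0S : ∀ y ∈ S, 0 ≤ H y := fun y hy =>
    ge_of_tendsto (hconv y hy) (Eventually.of_forall fun n => ENNReal.toReal_nonneg)
  -- value on closed orthants at good points
  have hLge_orth : ∀ y ∈ S, ∀ U : Set (Fin d → EReal), IsOpen U → AE y ⊆ U → H y ≤ L U := by
    intro y hy U hU hAU
    refine le_of_tendsto_of_tendsto' ((hconv y hy).mono_left h𝒰le) (hLtendsto U) ?_
    intro n
    have : (ρn n (orth y)).toReal = g (AE y) n := by rw [hgdef]; simp only [hgAE]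
    rw [this]
    exact hgmono _ _ hAU n
  have hLle_UE : ∀ c ∈ S, L (UE c) ≤ H c := by
    intro c hc
    refine le_of_tendsto_of_tendsto' (hLtendsto (UE c)) ((hconv c hc).mono_left h𝒰le) ?_
    intro n
    have h2 : (ρn n (orth c)).toReal = g (AE c) n := by rw [hgdef]; simp only [hgAE]
    rw [h2]
    exact hgmono _ _ (UE_subset_AE c) n
  have mAE_le : ∀ (y : Fin d → ℝ) (δ : ℝ), 0 < δ → sh y δ ∈ S →
      μY (AE y) ≤ ENNReal.ofReal (H (sh y δ)) := by
    intro y δ hδ hS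
    rw [hμYdef, cont.measure_apply (isClosed_AE y).measurableSet]
    exact (m2 (AE y) (UE (sh y δ)) (isOpen_UE _) (AE_subset_UE hδ)).trans
      (ENNReal.ofReal_le_ofReal (hLle_UE _ hS))
  have mAE_ge : ∀ y ∈ S, ENNReal.ofReal (H y) ≤ μY (AE y) := by
    intro y hy
    rw [hμYdef, cont.measure_apply (isClosed_AE y).measurableSet]
    refine le_trans ?_ (m3 (AE y) ⟨AE y, isCompact_AE y⟩ subset_rfl)
    rw [hcont_apply]
    exact ENNReal.ofReal_le_ofReal (hlam_ge _ _ (hLge_orth y hy))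
  have mAE_eq : ∀ y ∈ S, μY (AE y) = ENNReal.ofReal (H y) := by
    intro y hy
    refine le_antisymm ?_ (mAE_ge y hy)
    -- choose a good sequence of shifts
    have hex : ∀ m : ℕ, ∃ δ : ℝ, 0 < δ ∧ δ < 1/((m:ℝ)+1) ∧ sh y δ ∈ S := by
      intro m
      exact hdense y _ (by positivity)
    choose δ hδ0 hδlt hδS using hex
    have hδlim : Tendsto δ atTop (𝓝 0) :=
      squeeze_zero (fun m => (hδ0 m).le) (fun m => (hδlt m).le)
        tendsto_one_div_add_atTop_nhds_zero_nat
    have hbound : ∀ m, μY (AE y) ≤ ENNReal.ofReal (H (sh y (δ m))) := fun m =>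
      mAE_le y (δ m) (hδ0 m) (hδS m)
    have hlimit : Tendsto (fun m => ENNReal.ofReal (H (sh y (δ m)))) atTop
        (𝓝 (ENNReal.ofReal (H y))) :=
      (ENNReal.continuous_ofReal.tendsto _).comp (hrc y δ hδ0 hδlim)
    exact ge_of_tendsto hlimit (Eventually.of_forall hbound)
  -- total mass 1
  have hμYuniv : μY Set.univ = 1 := by
    rw [hμYdef, cont.measure_apply MeasurableSet.univ,
      cont.outerMeasure_of_isOpen Set.univ isOpen_univ]
    apply le_antisymm
    · rw [MeasureTheory.Content.innerContent]
      refine iSup₂_le ?_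
      intro K _
      rw [hcont_apply]
      calc ENNReal.ofReal (lam K) ≤ ENNReal.ofReal 1 :=
            ENNReal.ofReal_le_ofReal ((hlam_le K Set.univ isOpen_univ (Set.subset_univ _)).trans
              (hL1 _))
        _ = 1 := by simp
    · have h1 : (1:ℝ≥0∞) = ENNReal.ofReal (lam ⟨Set.univ, isCompact_univ⟩) := by
        have : lam ⟨Set.univ, isCompact_univ⟩ = 1 := by
          apply le_antisymm
          · exact (hlam_le _ Set.univ isOpen_univ (Set.subset_univ _)).trans (hL1 _) |>.trans
              (le_refl 1)
          · refine hlam_ge _ 1 ?_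
            intro U hU hsub
            have : U = Set.univ := Set.eq_univ_of_univ_subset hsub
            rw [this, hLuniv]
        rw [this]; simp
      rw [h1]
      exact le_trans (le_of_eq (hcont_apply _).symm)
        (cont.le_innerContent _ ⟨Set.univ, isOpen_univ⟩ (Set.subset_univ _))
  haveI hμYprob : IsProbabilityMeasure μY := ⟨hμYuniv⟩
  -- no mass at -∞
  have hbot : ∀ i : Fin d, μY {z : Fin d → EReal | z i = ⊥} = 0 := by
    intro i
    have hms : MeasurableSet {z : Fin d → EReal | z i = ⊥} :=
      (measurable_pi_apply i) (measurableSet_singleton ⊥)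
    have hbound : ∀ ε : ℝ, 0 < ε → μY {z : Fin d → EReal | z i = ⊥} ≤ ENNReal.ofReal ε := by
      intro ε hε
      obtain ⟨M, hM⟩ := htail_low i ε hε
      set U : Set (Fin d → EReal) := {z | z i < ((M:ℝ) : EReal)} with hUdef
      have hUopen : IsOpen U := IsOpen.preimage (continuous_apply i) isOpen_Iio
      have hsub : {z : Fin d → EReal | z i = ⊥} ⊆ U := by
        intro z hz
        rw [hUdef]
        simp only [Set.mem_setOf_eq]
        rw [Set.mem_setOf_eq] at hz
        rw [hz]
        exact EReal.bot_lt_coe M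
      have h1 : μY {z : Fin d → EReal | z i = ⊥} ≤ ENNReal.ofReal (L U) := by
        rw [hμYdef, cont.measure_apply hms]
        exact m2 _ U hUopen hsub
      refine h1.trans (ENNReal.ofReal_le_ofReal ?_)
      refine le_of_tendsto (hLtendsto U) ?_
      have hev : ∀ᶠ n in (𝒰 : Filter ℕ), g U n ≤ ε := by
        apply h𝒰le
        filter_upwards [hM] with n hn
        refine le_trans ?_ hn
        have hUpre : eE ⁻¹' U ⊆ hsp i M := by
          intro x hx
          rw [hUdef] at hx
          simp only [Set.mem_preimage, Set.mem_setOf_eq, eE] at hx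
          exact le_of_lt (EReal.coe_lt_coe_iff.mp hx)
        have : ρh n U = ρn n (eE ⁻¹' U) :=
          Measure.map_apply measurable_eE (hUopen.measurableSet)
        rw [hgdef]
        simp only
        rw [this]
        exact ENNReal.toReal_mono (measure_ne_top _ _) (measure_mono hUpre)
      exact hev
    have htend : Tendsto (fun m : ℕ => ENNReal.ofReal (1/((m:ℝ)+1))) atTop (𝓝 0) := by
      have : Tendsto (fun m : ℕ => (1:ℝ)/((m:ℝ)+1)) atTop (𝓝 0) :=
        tendsto_one_div_add_atTop_nhds_zero_nat
      have := (ENNReal.continuous_ofReal.tendsto _).comp this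
      simpa [Function.comp_def] using this
    have : μY {z : Fin d → EReal | z i = ⊥} ≤ 0 :=
      ge_of_tendsto htend (Eventually.of_forall fun m => hbound _ (by positivity))
    exact le_antisymm this (zero_le)
  -- no mass at +∞
  have htop : ∀ i : Fin d, μY {z : Fin d → EReal | z i = ⊤} = 0 := by
    intro i
    have hms : MeasurableSet {z : Fin d → EReal | z i = ⊤} :=
      (measurable_pi_apply i) (measurableSet_singleton ⊤)
    have hbound : ∀ ε : ℝ, 0 < ε → ε < 1 →
        μY {z : Fin d → EReal | z i = ⊤} ≤ ENNReal.ofReal ε := by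
      intro ε hε hε1
      obtain ⟨y, hyS, hyH⟩ := htail_high ε hε
      have hsub : {z : Fin d → EReal | z i = ⊤} ⊆ (AE y)ᶜ := by
        intro z hz hzAE
        rw [Set.mem_setOf_eq] at hz
        have := hzAE i
        rw [hz] at this
        exact absurd this (by simp)
      have h1 : μY {z : Fin d → EReal | z i = ⊤} ≤ μY ((AE y)ᶜ) := measure_mono hsub
      have h2 : μY ((AE y)ᶜ) = 1 - μY (AE y) := by
        rw [measure_compl (isClosed_AE y).measurableSet (measure_ne_top _ _), hμYuniv]
      rw [h2, mAE_eq y hyS] at h1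
      refine h1.trans ?_
      rw [tsub_le_iff_right]
      calc (1:ℝ≥0∞) = ENNReal.ofReal ((1-ε) + ε) := by norm_num
        _ = ENNReal.ofReal (1-ε) + ENNReal.ofReal ε :=
            ENNReal.ofReal_add (by linarith) hε.le
        _ ≤ ENNReal.ofReal ε + ENNReal.ofReal (H y) := by
            rw [add_comm]
            exact add_le_add le_rfl (ENNReal.ofReal_le_ofReal hyH)
    have htend : Tendsto (fun m : ℕ => ENNReal.ofReal (1/((m:ℝ)+2))) atTop (𝓝 0) := by
      have h2 : Tendsto (fun m : ℕ => (1:ℝ)/((m:ℝ)+2)) atTop (𝓝 0) := by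
        have hb : ∀ m : ℕ, (1:ℝ)/((m:ℝ)+2) ≤ 1/((m:ℝ)+1) := fun m =>
          one_div_le_one_div_of_le (by positivity) (by linarith)
        exact squeeze_zero (fun m => by positivity) hb
          tendsto_one_div_add_atTop_nhds_zero_nat
      have := (ENNReal.continuous_ofReal.tendsto _).comp h2
      simpa [Function.comp_def] using this
    have hle : μY {z : Fin d → EReal | z i = ⊤} ≤ 0 := by
      refine ge_of_tendsto htend (Eventually.of_forall fun m => ?_)
      refine hbound _ (by positivity) ?_
      rw [div_lt_one (by positivity)]
      linarith
    exact le_antisymm hle (zero_le)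
  -- the bad set is null
  set bad : Set (Fin d → EReal) :=
    ⋃ i : Fin d, ({z : Fin d → EReal | z i = ⊥} ∪ {z : Fin d → EReal | z i = ⊤}) with hbaddef
  have hbadnull : μY bad = 0 := by
    rw [hbaddef]
    refine measure_iUnion_null fun i => measure_union_null (hbot i) (htop i)
  -- pull back to ℝ^d
  set rr : (Fin d → EReal) → (Fin d → ℝ) := fun z i => (z i).toReal with hrrdef
  have hrrmeas : Measurable rr :=
    measurable_pi_lambda _ fun i => measurable_ereal_toReal.comp (measurable_pi_apply i)
  refine ⟨μY.map rr, Measure.isProbabilityMeasure_map hrrmeas.aemeasurable, ?_⟩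
  have hmap : ∀ y : Fin d → ℝ, (μY.map rr) (orth y) = μY (AE y) := by
    intro y
    rw [Measure.map_apply hrrmeas (measurableSet_orth y)]
    apply measure_congr
    have hae : ∀ᵐ z ∂μY, z ∉ bad := measure_eq_zero_iff_ae_notMem.mp hbadnull
    rw [Filter.eventuallyEq_set]
    filter_upwards [hae] with z hz
    have hzi : ∀ i, z i ≠ ⊥ ∧ z i ≠ ⊤ := by
      intro i
      constructor
      · intro h
        exact hz (Set.mem_iUnion.mpr ⟨i, Or.inl h⟩)
      · intro h
        exact hz (Set.mem_iUnion.mpr ⟨i, Or.inr h⟩)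
    constructor
    · intro hmem i
      have h1 : (z i).toReal ≤ y i := hmem i
      have h2 : z i = (((z i).toReal : ℝ) : EReal) := (EReal.coe_toReal (hzi i).2 (hzi i).1).symm
      rw [h2]
      exact_mod_cast EReal.coe_le_coe_iff.mpr h1
    · intro hmem i
      have h1 : z i ≤ ((y i : ℝ) : EReal) := hmem i
      have := EReal.toReal_le_toReal h1 (hzi i).1 (by simp)
      simpa using this
  intro y
  by_cases hyS : y ∈ S
  · rw [hmap y, mAE_eq y hyS, ENNReal.toReal_ofReal (hH0S y hyS)]
  · -- approximate from above by good points
    have hex : ∀ m : ℕ, ∃ δ : ℝ, 0 < δ ∧ δ < 1/((m:ℝ)+1) ∧ sh y δ ∈ S := by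
      intro m
      exact hdense y _ (by positivity)
    choose δ hδ0 hδlt hδS using hex
    have hδlim : Tendsto δ atTop (𝓝 0) :=
      squeeze_zero (fun m => (hδ0 m).le) (fun m => (hδlt m).le)
        tendsto_one_div_add_atTop_nhds_zero_nat
    haveI : IsProbabilityMeasure (μY.map rr) := Measure.isProbabilityMeasure_map hrrmeas.aemeasurable
    have h1 : Tendsto (fun m => ((μY.map rr) (orth (sh y (δ m)))).toReal) atTop
        (𝓝 (((μY.map rr) (orth y)).toReal)) := df_rightCont (μY.map rr) y δ hδ0 hδlim
    have h2 : ∀ m, ((μY.map rr) (orth (sh y (δ m)))).toReal = H (sh y (δ m)) := by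
      intro m
      rw [hmap _, mAE_eq _ (hδS m), ENNReal.toReal_ofReal (hH0S _ (hδS m))]
    have h3 : Tendsto (fun m => H (sh y (δ m))) atTop
        (𝓝 (((μY.map rr) (orth y)).toReal)) := h1.congr h2
    exact tendsto_nhds_unique h3 (hrc y δ hδ0 hδlim)

end Key

end PhiMID

section Assembly

open PhiMID
open scoped ENNReal NNReal

variable {d : ℕ}

lemma PhiMID.df_nonneg (ν : ProbabilityMeasure (Fin d → ℝ)) (y : Fin d → ℝ) :
    0 ≤ DFof ν y := ENNReal.toReal_nonneg

lemma PhiMID.df_le_one (ν : ProbabilityMeasure (Fin d → ℝ)) (y : Fin d → ℝ) :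
    DFof ν y ≤ 1 := by
  have h1 : (ν : Measure (Fin d → ℝ)) {x | x ≤ y} ≤ 1 := prob_le_one
  calc ((ν : Measure (Fin d → ℝ)) {x | x ≤ y}).toReal ≤ (1:ℝ≥0∞).toReal :=
        ENNReal.toReal_mono (by simp) h1
    _ = 1 := by simp

/-- Convergence of DFs at points whose orthant has null frontier. -/
lemma PhiMID.df_conv {νs : ℕ → ProbabilityMeasure (Fin d → ℝ)}
    {ν : ProbabilityMeasure (Fin d → ℝ)} (h : Tendsto νs atTop (𝓝 ν)) {y : Fin d → ℝ}
    (hy : (ν : Measure (Fin d → ℝ)) (frontier (orth y)) = 0) :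
    Tendsto (fun n => DFof (νs n) y) atTop (𝓝 (DFof ν y)) :=
  portmanteau_toReal h hy

theorem phiMID_closed_under_weak_limits' (d : ℕ)
    (φ : ℝ → ℝ) (hφ : IsLaplaceOfPos φ)
    (νF νG : ℕ → ProbabilityMeasure (Fin d → ℝ))
    (νFlim νGlim : ProbabilityMeasure (Fin d → ℝ))
    (hGmid : ∀ n, IsMID (DFof (νG n)))
    (hrel : ∀ n, PhiRel φ (DFof (νF n)) (DFof (νG n)))
    (hFconv : Tendsto νF atTop (𝓝 νFlim))
    (hGconv : Tendsto νG atTop (𝓝 νGlim)) :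
    IsMID (DFof νGlim) ∧ PhiRel φ (DFof νFlim) (DFof νGlim) := by
  constructor
  · -- MID part
    constructor
    · exact ⟨(νGlim : Measure (Fin d → ℝ)), inferInstance, fun y => rfl⟩
    · intro k hk
      have hch : ∀ n, ∃ ρ : Measure (Fin d → ℝ), IsProbabilityMeasure ρ ∧
          ∀ y, DFof (νG n) y ^ ((k : ℝ)⁻¹) = (ρ {x | x ≤ y}).toReal := fun n =>
        (hGmid n).2 k hk
      choose ρn hρn hρdf using hch
      have hrpow_cont : ∀ t : ℝ, ContinuousAt (fun s : ℝ => s ^ ((k:ℝ)⁻¹)) t := fun t =>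
        Real.continuousAt_rpow_const t _ (Or.inr (by positivity))
      have hmain := key_exists_df_measure ρn hρn
        (fun y => DFof νGlim y ^ ((k:ℝ)⁻¹))
        {y | (νGlim : Measure (Fin d → ℝ)) (frontier (orth y)) = 0}
        ?_ ?_ ?_ ?_ ?_
      · obtain ⟨ρ, hρprob, hρeq⟩ := hmain
        exact ⟨ρ, hρprob, fun y => (hρeq y).symm⟩
      · -- hconv
        intro y hy
        have hport := df_conv hGconv hy
        have := ((hrpow_cont (DFof νGlim y)).tendsto).comp hport
        refine this.congr ?_
        intro n
        exact (hρdf n y)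
      · -- hdense
        intro y ε hε
        obtain ⟨δ, h1, h2, h3⟩ := good_shift (νGlim : Measure (Fin d → ℝ)) y hε
        exact ⟨δ, h1, h2, h3⟩
      · -- hrc
        intro y δ h0 hlim
        exact ((hrpow_cont (DFof νGlim y)).tendsto).comp
          (df_rightCont (νGlim : Measure (Fin d → ℝ)) y δ h0 hlim)
      · -- htail_low
        intro i ε hε
        set εk : ℝ := ε ^ (k:ℝ) with hεkdef
        have hεk : 0 < εk := Real.rpow_pos_of_pos hε _
        obtain ⟨M, hMnull, hMbd⟩ :=
          good_low_level (νGlim : Measure (Fin d → ℝ)) i (half_pos hεk)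
        refine ⟨M, ?_⟩
        have hport := portmanteau_toReal hGconv hMnull
        have hev : ∀ᶠ n in atTop, ((νG n : Measure (Fin d → ℝ)) (hsp i M)).toReal < εk :=
          hport.eventually_lt_const (lt_of_le_of_lt hMbd (by linarith))
        filter_upwards [hev] with n hn
        -- pointwise bound
        have hbd : (ρn n (hsp i M)).toReal ≤
            ((νG n : Measure (Fin d → ℝ)) (hsp i M)).toReal ^ ((k:ℝ)⁻¹) := by
          set yT : ℕ → Fin d → ℝ := fun T j => if j = i then M else T with hyTdef
          have hmono : Monotone (fun T : ℕ => orth (yT T)) := by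
            intro a b hab
            apply orth_mono
            intro j
            by_cases hji : j = i <;> simp [hyTdef, hji]
            exact_mod_cast hab
          have hunion : (⋃ T : ℕ, orth (yT T)) = hsp i M := by
            ext x
            simp only [Set.mem_iUnion, orth, hsp, Set.mem_setOf_eq, Pi.le_def]
            constructor
            · rintro ⟨T, hT⟩
              have := hT i
              simpa [hyTdef] using this
            · intro hx
              obtain ⟨T, hT⟩ : ∃ T : ℕ, ∀ j, x j ≤ T := by
                refine ⟨Finset.univ.sup (fun j => ⌈x j⌉₊), fun j => ?_⟩
                calc x j ≤ (⌈x j⌉₊ : ℝ) := Nat.le_ceil _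
                  _ ≤ _ := Nat.cast_le.mpr (Finset.le_sup (f := fun j => ⌈x j⌉₊) (Finset.mem_univ j))
              refine ⟨T, fun j => ?_⟩
              by_cases hji : j = i
              · simpa [hyTdef, hji] using hx
              · simp only [hyTdef, if_neg hji]
                exact hT j
          have htd : Tendsto (fun T => ρn n (orth (yT T))) atTop (𝓝 (ρn n (hsp i M))) := by
            have := MeasureTheory.tendsto_measure_iUnion_atTop (μ := ρn n)
              (s := fun T : ℕ => orth (yT T)) hmono
            rwa [hunion] at this
          have htdR : Tendsto (fun T => (ρn n (orth (yT T))).toReal) atTop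
              (𝓝 ((ρn n (hsp i M)).toReal)) :=
            (ENNReal.tendsto_toReal (measure_ne_top _ _)).comp htd
          refine le_of_tendsto htdR (Eventually.of_forall fun T => ?_)
          have h1 : (ρn n (orth (yT T))).toReal = DFof (νG n) (yT T) ^ ((k:ℝ)⁻¹) :=
            (hρdf n (yT T)).symm
          rw [h1]
          apply Real.rpow_le_rpow (df_nonneg _ _) _ (by positivity)
          apply ENNReal.toReal_mono (measure_ne_top _ _)
          apply measure_mono
          intro x hx
          have := hx i
          simpa [hyTdef, hsp] using this
        refine hbd.trans ?_
        have : ((νG n : Measure (Fin d → ℝ)) (hsp i M)).toReal ^ ((k:ℝ)⁻¹) ≤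
            εk ^ ((k:ℝ)⁻¹) :=
          Real.rpow_le_rpow ENNReal.toReal_nonneg hn.le (by positivity)
        refine this.trans ?_
        rw [hεkdef, Real.rpow_rpow_inv hε.le (by positivity)]
      · -- htail_high
        intro ε hε
        rcases le_or_gt (1 - ε) 0 with hneg | hpos
        · obtain ⟨δ, h1, h2, h3⟩ := good_shift (νGlim : Measure (Fin d → ℝ)) 0 one_pos
          exact ⟨sh 0 δ, h3, le_trans hneg (Real.rpow_nonneg (df_nonneg _ _) _)⟩
        · -- find a large orthant with measure close to 1
          have hunion : (⋃ m : ℕ, orth (fun _ => (m:ℝ) : Fin d → ℝ)) = Set.univ := by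
            ext x
            simp only [Set.mem_iUnion, orth, Set.mem_setOf_eq, Pi.le_def, Set.mem_univ,
              iff_true]
            obtain ⟨T, hT⟩ : ∃ T : ℕ, ∀ j, x j ≤ T := by
              refine ⟨Finset.univ.sup (fun j => ⌈x j⌉₊), fun j => ?_⟩
              calc x j ≤ (⌈x j⌉₊ : ℝ) := Nat.le_ceil _
                _ ≤ _ := Nat.cast_le.mpr (Finset.le_sup (f := fun j => ⌈x j⌉₊) (Finset.mem_univ j))
            exact ⟨T, hT⟩
          have hmono : Monotone (fun m : ℕ => orth (fun _ => (m:ℝ) : Fin d → ℝ)) := by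
            intro a b hab
            apply orth_mono
            intro j
            show (a:ℝ) ≤ (b:ℝ)
            exact_mod_cast hab
          have htd : Tendsto (fun m : ℕ => (νGlim : Measure (Fin d → ℝ))
              (orth (fun _ => (m:ℝ) : Fin d → ℝ))) atTop (𝓝 1) := by
            have := MeasureTheory.tendsto_measure_iUnion_atTop
              (μ := (νGlim : Measure (Fin d → ℝ)))
              (s := fun m : ℕ => orth (fun _ => (m:ℝ) : Fin d → ℝ)) hmono
            rwa [hunion, measure_univ] at this
          have htdR : Tendsto (fun m : ℕ => ((νGlim : Measure (Fin d → ℝ))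
              (orth (fun _ => (m:ℝ) : Fin d → ℝ))).toReal) atTop (𝓝 1) := by
            have := (ENNReal.tendsto_toReal (by simp : (1:ℝ≥0∞) ≠ ⊤)).comp htd
            simpa [Function.comp_def] using this
          have hev : ∀ᶠ m : ℕ in atTop, 1 - ε < ((νGlim : Measure (Fin d → ℝ))
              (orth (fun _ => (m:ℝ) : Fin d → ℝ))).toReal :=
            htdR.eventually_const_lt (by linarith)
          obtain ⟨m, hm⟩ := hev.exists
          obtain ⟨δ, h1, h2, h3⟩ :=
            good_shift (νGlim : Measure (Fin d → ℝ)) (fun _ => (m:ℝ)) one_pos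
          refine ⟨sh (fun _ => (m:ℝ)) δ, h3, ?_⟩
          have hGmono : ((νGlim : Measure (Fin d → ℝ))
              (orth (fun _ => (m:ℝ) : Fin d → ℝ))).toReal ≤
              DFof νGlim (sh (fun _ => (m:ℝ)) δ) := by
            apply ENNReal.toReal_mono (measure_ne_top _ _)
            apply measure_mono
            apply orth_mono
            intro j
            simp only [sh]
            linarith
          have hG1 : 1 - ε ≤ DFof νGlim (sh (fun _ => (m:ℝ)) δ) := by linarith
          have hGle1 : DFof νGlim (sh (fun _ => (m:ℝ)) δ) ≤ 1 := df_le_one _ _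
          have hGpos : 0 < DFof νGlim (sh (fun _ => (m:ℝ)) δ) := lt_of_lt_of_le hpos hG1
          calc (1:ℝ) - ε ≤ DFof νGlim (sh (fun _ => (m:ℝ)) δ) := hG1
            _ ≤ DFof νGlim (sh (fun _ => (m:ℝ)) δ) ^ ((k:ℝ)⁻¹) := by
                nth_rewrite 1 [← Real.rpow_one (DFof νGlim (sh (fun _ => (m:ℝ)) δ))]
                exact Real.rpow_le_rpow_of_exponent_ge hGpos hGle1 (by
                  rw [inv_le_one₀ (by exact_mod_cast hk)]
                  exact_mod_cast hk)
  · -- PhiRel part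
    intro y
    suffices hFy : DFof νFlim y = PhiMID.psi φ (DFof νGlim y) by
      constructor
      · intro h0
        rw [hFy, PhiMID.psi, if_pos h0]
      · intro h0
        rw [hFy, h0, PhiMID.psi, if_neg (lt_irrefl 0)]
    set κ : Measure (Fin d → ℝ) := (νFlim : Measure (Fin d → ℝ)) + (νGlim : Measure (Fin d → ℝ))
      with hκdef
    haveI : IsFiniteMeasure κ := by
      rw [hκdef]; infer_instance
    obtain ⟨δ, hδ0, hδlim, hδnull⟩ := good_seq κ y
    have hnullF : ∀ m, (νFlim : Measure (Fin d → ℝ)) (frontier (orth (sh y (δ m)))) = 0 := by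
      intro m
      have := hδnull m
      rw [hκdef, Measure.add_apply] at this
      exact (add_eq_zero.mp this).1
    have hnullG : ∀ m, (νGlim : Measure (Fin d → ℝ)) (frontier (orth (sh y (δ m)))) = 0 := by
      intro m
      have := hδnull m
      rw [hκdef, Measure.add_apply] at this
      exact (add_eq_zero.mp this).2
    have claim : ∀ m, DFof νFlim (sh y (δ m)) = PhiMID.psi φ (DFof νGlim (sh y (δ m))) := by
      intro m
      refine psi_limit hφ (t := fun n => DFof (νG n) (sh y (δ m)))
        (fun n => ⟨df_nonneg _ _, df_le_one _ _⟩)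
        (df_conv hGconv (hnullG m))
        (s := fun n => DFof (νF n) (sh y (δ m))) ?_
        (df_conv hFconv (hnullF m))
      intro n
      by_cases hpos : 0 < DFof (νG n) (sh y (δ m))
      · rw [PhiMID.psi, if_pos hpos]
        exact (hrel n (sh y (δ m))).1 hpos
      · rw [PhiMID.psi, if_neg hpos]
        exact (hrel n (sh y (δ m))).2 (le_antisymm (not_lt.mp hpos) (df_nonneg _ _))
    refine psi_limit hφ (t := fun m => DFof νGlim (sh y (δ m)))
      (fun m => ⟨df_nonneg _ _, df_le_one _ _⟩)
      (df_rightCont (νGlim : Measure (Fin d → ℝ)) y δ hδ0 hδlim)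
      (s := fun m => DFof νFlim (sh y (δ m))) claim
      (df_rightCont (νFlim : Measure (Fin d → ℝ)) y δ hδ0 hδlim)

end Assembly

/-- Theorem 3.3: if `F_n = φ(-log G_n)` are φ-MID distribution functions on
`ℝ^d` (`G_n` MID), `F_n → F` weakly and `G_n → G` weakly with `F`, `G` proper distribution
functions, then `G` is MID and `F = φ(-log G)`: the weak limit of φ-MID laws is φ-MID. -/
theorem phiMID_closed_under_weak_limits (d : ℕ) (hd : 2 ≤ d)
    (φ : ℝ → ℝ) (hφ : IsLaplaceOfPos φ)
    (νF νG : ℕ → ProbabilityMeasure (Fin d → ℝ))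
    (νFlim νGlim : ProbabilityMeasure (Fin d → ℝ))
    (hGmid : ∀ n, IsMID (DFof (νG n)))
    (hrel : ∀ n, PhiRel φ (DFof (νF n)) (DFof (νG n)))
    (hFconv : Tendsto νF atTop (𝓝 νFlim))
    (hGconv : Tendsto νG atTop (𝓝 νGlim)) :
    IsMID (DFof νGlim) ∧ PhiRel φ (DFof νFlim) (DFof νGlim) :=
  phiMID_closed_under_weak_limits' d φ hφ νF νG νFlim νGlim hGmid hrel hFconv hGconv
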